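/- Let d ≥ 1, let K ⊆ ℝ^d be a convex, compact set contained in the nonnegative orthant that is down-closed with lower bound 0, and suppose there exists r > 0 with r·B^d_{≥0} ⊆ K. Let δ > 0 be small enough that α := (√d+1)δ/r < 1. Then for every point a' ∈ (1−α)·K and every point s in the topological boundary of K all of whose coordinates are strictly positive, one has ‖a' − s‖ ≥ (√d+1)·δ. -/

import Mathlib

open Metric Set

/-- A set `P ⊆ ℝ^d` is down-closed with lower bound `u`: `u ∈ P`, every `y ∈ P`
satisfies `u ≤ y` coordinatewise, and whenever `u ≤ x ≤ y` with `y ∈ P`, also `x ∈ P`. -/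
def DownClosedWithLB {d : ℕ} (u : EuclideanSpace ℝ (Fin d)) (P : Set (EuclideanSpace ℝ (Fin d))) :
    Prop :=
  u ∈ P ∧ (∀ y ∈ P, ∀ i, u i ≤ y i) ∧
    ∀ x y : EuclideanSpace ℝ (Fin d), y ∈ P → (∀ i, u i ≤ x i) → (∀ i, x i ≤ y i) → x ∈ P

lemma euc_norm_le_norm {d : ℕ} (x y : EuclideanSpace ℝ (Fin d)) (h : ∀ i, |x i| ≤ |y i|) :
    ‖x‖ ≤ ‖y‖ := by
  rw [EuclideanSpace.norm_eq, EuclideanSpace.norm_eq]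
  apply Real.sqrt_le_sqrt
  apply Finset.sum_le_sum
  intro i _
  simp only [Real.norm_eq_abs]
  exact pow_le_pow_left₀ (abs_nonneg _) (h i) 2

lemma euc_abs_coord_le_norm {d : ℕ} (x : EuclideanSpace ℝ (Fin d)) (i : Fin d) :
    |x i| ≤ ‖x‖ := by
  rw [EuclideanSpace.norm_eq]
  have h1 : |x i| ^ 2 ≤ ∑ j, ‖x j‖ ^ 2 := by
    have := Finset.single_le_sum (f := fun j => ‖x j‖ ^ 2)
      (fun j _ => sq_nonneg _) (Finset.mem_univ i)
    simpa [Real.norm_eq_abs] using this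
  calc |x i| = Real.sqrt (|x i| ^ 2) := by rw [Real.sqrt_sq_eq_abs, abs_abs]
  _ ≤ _ := Real.sqrt_le_sqrt h1

lemma euc_norm_const {d : ℕ} (ε : ℝ) (hε : 0 ≤ ε) (x : EuclideanSpace ℝ (Fin d))
    (h : ∀ i, x i = ε) : ‖x‖ = Real.sqrt d * ε := by
  rw [EuclideanSpace.norm_eq]
  simp only [h, Real.norm_eq_abs, Finset.sum_const, Finset.card_univ, Fintype.card_fin,
    nsmul_eq_mul]
  rw [Real.sqrt_mul (by positivity), Real.sqrt_sq_eq_abs, abs_of_nonneg hε,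
    abs_of_nonneg hε]

theorem dist_shrunk_point_to_positive_boundary
    (d : ℕ) (hd : 1 ≤ d) (K : Set (EuclideanSpace ℝ (Fin d)))
    (hconv : Convex ℝ K) (hcomp : IsCompact K)
    (hpos : K ⊆ {x | ∀ i, 0 ≤ x i})
    (hdown : DownClosedWithLB (0 : EuclideanSpace ℝ (Fin d)) K)
    (r : ℝ) (hr : 0 < r)
    (hrK : (fun x : EuclideanSpace ℝ (Fin d) => r • x) ''
        (closedBall (0 : EuclideanSpace ℝ (Fin d)) 1 ∩ {x | ∀ i, 0 ≤ x i}) ⊆ K)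
    (δ : ℝ) (hδ : 0 < δ)
    (α : ℝ) (hα : α = (Real.sqrt d + 1) * δ / r) (hα1 : α < 1)
    (a' : EuclideanSpace ℝ (Fin d))
    (ha' : a' ∈ (fun x : EuclideanSpace ℝ (Fin d) => (1 - α) • x) '' K)
    (s : EuclideanSpace ℝ (Fin d)) (hs : s ∈ frontier K) (hspos : ∀ i, 0 < s i) :
    (Real.sqrt d + 1) * δ ≤ ‖a' - s‖ := by
  have hsd : (0:ℝ) ≤ Real.sqrt d := Real.sqrt_nonneg _
  have hα0 : 0 < α := by rw [hα]; positivity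
  have hαr : α * r = (Real.sqrt d + 1) * δ := by rw [hα]; field_simp
  have hαr0 : 0 < α * r := mul_pos hα0 hr
  by_contra hlt
  push_neg at hlt
  obtain ⟨a, haK, ha'eq⟩ := ha'
  have ha'c : ∀ i, a' i = (1 - α) * a i := by
    intro i; rw [← ha'eq]; simp
  have ha'0 : ∀ i, 0 ≤ a' i := fun i => by
    rw [ha'c i]; exact mul_nonneg (by linarith) (hpos haK i)
  -- the vector of positive parts of s - a'
  set v : EuclideanSpace ℝ (Fin d) := WithLp.toLp 2 (fun i => max (s i - a' i) 0) with hvdef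
  have hvc : ∀ i, v i = max (s i - a' i) 0 := fun i => rfl
  have hv0 : ∀ i, 0 ≤ v i := fun i => le_max_right _ _
  have hvnorm : ‖v‖ < α * r := by
    have h1 : ‖v‖ ≤ ‖s - a'‖ := by
      apply euc_norm_le_norm
      intro i
      have h2 : (s - a') i = s i - a' i := by simp
      rw [h2, hvc i, abs_of_nonneg (hv0 i)]
      exact max_le (le_abs_self _) (abs_nonneg _)
    rw [norm_sub_rev] at h1
    calc ‖v‖ ≤ ‖a' - s‖ := h1
    _ < (Real.sqrt d + 1) * δ := hlt
    _ = α * r := hαr.symm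
  have hne : Nonempty (Fin d) := ⟨⟨0, hd⟩⟩
  set m := Finset.univ.inf' Finset.univ_nonempty (fun i => s i) with hm
  have hm0 : 0 < m := by
    rw [hm, Finset.lt_inf'_iff]
    exact fun i _ => hspos i
  have hms : ∀ i, m ≤ s i := fun i => Finset.inf'_le _ (Finset.mem_univ i)
  have hgap : 0 < α * r - ‖v‖ := by linarith
  set ε := min ((α * r - ‖v‖) / (Real.sqrt d + 1)) (m / 2) with hεdef
  have hε0 : 0 < ε := lt_min (div_pos hgap (by linarith)) (by linarith)
  have hε1 : ε * (Real.sqrt d + 1) ≤ α * r - ‖v‖ := by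
    rw [← le_div_iff₀ (by linarith : (0:ℝ) < Real.sqrt d + 1)]
    exact min_le_left _ _
  have hε2 : ε ≤ m / 2 := min_le_right _ _
  have hball : ball s ε ⊆ K := by
    intro z hz
    rw [mem_ball, dist_eq_norm] at hz
    have hzs : ∀ i, |z i - s i| < ε := by
      intro i
      refine lt_of_le_of_lt ?_ hz
      have h2 := euc_abs_coord_le_norm (z - s) i
      simpa using h2
    have hz0 : ∀ i, 0 ≤ z i := by
      intro i
      have h1 := (abs_lt.1 (hzs i)).1
      have h2 := hms i
      linarith
    set w : EuclideanSpace ℝ (Fin d) := WithLp.toLp 2 (fun i => max (z i - a' i) 0) with hwdef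
    have hwc : ∀ i, w i = max (z i - a' i) 0 := fun i => rfl
    have hw0 : ∀ i, 0 ≤ w i := fun i => le_max_right _ _
    have hwv : ∀ i, w i ≤ v i + ε := by
      intro i
      rw [hwc i, hvc i]
      have h1 := (abs_lt.1 (hzs i)).2
      apply max_le
      · have h2 : z i - a' i ≤ (s i - a' i) + ε := by linarith
        calc z i - a' i ≤ (s i - a' i) + ε := h2
        _ ≤ max (s i - a' i) 0 + ε := by gcongr; exact le_max_left _ _
      · exact add_nonneg (le_max_right _ _) hε0.le
    have hwnorm : ‖w‖ < α * r := by
      set c : EuclideanSpace ℝ (Fin d) := WithLp.toLp 2 (fun _ => ε) with hcdef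
      have hcc : ∀ i, c i = ε := fun i => rfl
      have hcnorm : ‖c‖ = Real.sqrt d * ε := euc_norm_const ε hε0.le c hcc
      have h1 : ‖w‖ ≤ ‖v + c‖ := by
        apply euc_norm_le_norm
        intro i
        have h2 : (v + c) i = v i + ε := by simp [hcc]
        rw [h2, abs_of_nonneg (hw0 i), abs_of_nonneg (add_nonneg (hv0 i) hε0.le)]
        exact hwv i
      have h2 : ‖v + c‖ ≤ ‖v‖ + ‖c‖ := norm_add_le _ _
      nlinarith [hε1, hε0]
    set u : EuclideanSpace ℝ (Fin d) := (α * r)⁻¹ • w with hudef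
    have huc : ∀ i, u i = (α * r)⁻¹ * w i := fun i => rfl
    have hu0 : ∀ i, 0 ≤ u i := fun i => by
      rw [huc]
      exact mul_nonneg (inv_nonneg.2 hαr0.le) (hw0 i)
    have hunorm : ‖u‖ ≤ 1 := by
      rw [hudef, norm_smul, Real.norm_eq_abs, abs_of_pos (inv_pos.2 hαr0)]
      calc (α * r)⁻¹ * ‖w‖ ≤ (α * r)⁻¹ * (α * r) :=
        mul_le_mul_of_nonneg_left hwnorm.le (inv_nonneg.2 hαr0.le)
      _ = 1 := inv_mul_cancel₀ hαr0.ne'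
    have hruK : r • u ∈ K := hrK ⟨u, ⟨mem_closedBall_zero_iff.2 hunorm, hu0⟩, rfl⟩
    have hyK : (1 - α) • a + α • (r • u) ∈ K :=
      hconv haK hruK (by linarith) hα0.le (by ring)
    have hyw : α • (r • u) = w := by
      rw [hudef, smul_smul, smul_smul]
      have h3 : α * r * (α * r)⁻¹ = 1 := mul_inv_cancel₀ hαr0.ne'
      rw [h3, one_smul]
    have hyc : ∀ i, ((1 - α) • a + α • (r • u)) i = a' i + w i := by
      intro i
      rw [hyw]
      simp [ha'c i]
    refine hdown.2.2 z _ hyK (fun i => by simpa using hz0 i) ?_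
    intro i
    rw [hyc i]
    have h4 : z i - a' i ≤ w i := by rw [hwc i]; exact le_max_left _ _
    linarith
  have hint : s ∈ interior K :=
    mem_interior.2 ⟨ball s ε, hball, isOpen_ball, mem_ball_self hε0⟩
  exact hs.2 hint
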